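/- arXiv:1601.00042 — 2 statements merged into one kernel-verified Lean document; each statement's English description precedes it below -/
import Mathlib

section
/- Let T > 0 be such that Φ_v(T) is invertible, and let x₀, x_f, δx₀, δx_f ∈ ℝ⁶. Then the fixed-duration two-impulse steering cost between the perturbed endpoints satisfies J_T(x₀ + δx₀, x_f + δx_f) ≤ J_T(x₀, x_f) + √2·‖Φ_v(T)⁻¹‖·(‖δx_f‖ + ‖exp(T·A)‖·‖δx₀‖), where the matrix norms are operator norms. -/
noncomputable section

/-- Euclidean norm of a finite real vector. -/
def euclNorm {m : ℕ} (v : Fin m → ℝ) : ℝ := Real.sqrt (∑ i, v i ^ 2)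

/-- The CWH dynamics matrix. -/
def cwhA (ω : ℝ) : Matrix (Fin 6) (Fin 6) ℝ :=
  !![0, 0, 0, 1, 0, 0;
     0, 0, 0, 0, 1, 0;
     0, 0, 0, 0, 0, 1;
     3*ω^2, 0, 0, 0, 2*ω, 0;
     0, 0, 0, -2*ω, 0, 0;
     0, 0, -ω^2, 0, 0, 0]

/-- The CWH input matrix `B = [0; I₃]`. -/
def cwhB : Matrix (Fin 6) (Fin 3) ℝ :=
  !![0, 0, 0;
     0, 0, 0;
     0, 0, 0;
     1, 0, 0;
     0, 1, 0;
     0, 0, 1]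

/-- State transition matrix `exp(t A)`. -/
def expm (ω t : ℝ) : Matrix (Fin 6) (Fin 6) ℝ := NormedSpace.exp (t • cwhA ω)

/-- Horizontal concatenation of two `6 × 3` blocks into a `6 × 6` matrix. -/
def blockCat (M N : Matrix (Fin 6) (Fin 3) ℝ) : Matrix (Fin 6) (Fin 6) ℝ :=
  Matrix.of fun i j => if h : (j : ℕ) < 3 then M i ⟨j, h⟩ else N i ⟨(j : ℕ) - 3, by omega⟩

/-- The aggregated impulse matrix `Φ_v(T) = [exp(T A) B  B]`. -/
def Phiv (ω T : ℝ) : Matrix (Fin 6) (Fin 6) ℝ := blockCat (expm ω T * cwhB) cwhB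

/-- The two-impulse Gramian `G(T) = Φ_v(T) Φ_v(T)ᵀ`. -/
def gram (ω T : ℝ) : Matrix (Fin 6) (Fin 6) ℝ := Phiv ω T * (Phiv ω T).transpose

/-- First three components of a 6-vector. -/
def first3 (v : Fin 6 → ℝ) : Fin 3 → ℝ := fun i => v ⟨(i : ℕ), by omega⟩

/-- Last three components of a 6-vector. -/
def last3 (v : Fin 6 → ℝ) : Fin 3 → ℝ := fun i => v ⟨(i : ℕ) + 3, by omega⟩

/-- The stacked two-impulse steering solution. -/
def dVsteer (ω T : ℝ) (x₀ xf : Fin 6 → ℝ) : Fin 6 → ℝ :=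
  (Phiv ω T)⁻¹.mulVec (xf - (expm ω T).mulVec x₀)

/-- The fixed-duration two-impulse steering cost `J_T(x₀, x_f)`. -/
def Jfix (ω T : ℝ) (x₀ xf : Fin 6 → ℝ) : ℝ :=
  euclNorm (first3 (dVsteer ω T x₀ xf)) + euclNorm (last3 (dVsteer ω T x₀ xf))

/-- Euclidean operator norm of a `6 × 6` real matrix. -/
def opNorm (M : Matrix (Fin 6) (Fin 6) ℝ) : ℝ :=
  ‖(Matrix.toEuclideanCLM (𝕜 := ℝ) M : EuclideanSpace ℝ (Fin 6) →L[ℝ] EuclideanSpace ℝ (Fin 6))‖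

/-! ### Auxiliary lemmas -/

lemma euclNorm_eq {m : ℕ} (v : Fin m → ℝ) :
    euclNorm v = ‖(WithLp.equiv 2 (Fin m → ℝ)).symm v‖ := by
  rw [EuclideanSpace.norm_eq, euclNorm]
  congr 1; apply Finset.sum_congr rfl
  intro i _
  rw [Real.norm_eq_abs, sq_abs]; rfl

lemma euclNorm_nonneg' {m : ℕ} (v : Fin m → ℝ) : 0 ≤ euclNorm v := Real.sqrt_nonneg _

lemma euclNorm_add_le {m : ℕ} (v w : Fin m → ℝ) : euclNorm (v + w) ≤ euclNorm v + euclNorm w := by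
  simp only [euclNorm_eq]
  rw [show (WithLp.equiv 2 (Fin m → ℝ)).symm (v + w)
      = (WithLp.equiv 2 (Fin m → ℝ)).symm v + (WithLp.equiv 2 (Fin m → ℝ)).symm w from rfl]
  exact norm_add_le _ _

lemma euclNorm_neg {m : ℕ} (v : Fin m → ℝ) : euclNorm (-v) = euclNorm v := by
  unfold euclNorm; congr 1; apply Finset.sum_congr rfl; intro i _
  simp [neg_pow]

lemma euclNorm_mulVec_le (M : Matrix (Fin 6) (Fin 6) ℝ) (v : Fin 6 → ℝ) :
    euclNorm (M.mulVec v) ≤ opNorm M * euclNorm v := by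
  simp only [euclNorm_eq]
  have h := (Matrix.toEuclideanCLM (𝕜 := ℝ) M).le_opNorm
    ((WithLp.equiv 2 (Fin 6 → ℝ)).symm v)
  rw [show (Matrix.toEuclideanCLM (𝕜 := ℝ) M) ((WithLp.equiv 2 (Fin 6 → ℝ)).symm v)
      = (WithLp.equiv 2 (Fin 6 → ℝ)).symm (Matrix.toLin' M v) from rfl] at h
  rw [show Matrix.toLin' M v = M.mulVec v from rfl] at h
  exact h

lemma first3_add (v w : Fin 6 → ℝ) : first3 (v + w) = first3 v + first3 w := rfl
lemma last3_add (v w : Fin 6 → ℝ) : last3 (v + w) = last3 v + last3 w := rfl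

lemma euclNorm_split (v : Fin 6 → ℝ) :
    euclNorm (first3 v) + euclNorm (last3 v) ≤ Real.sqrt 2 * euclNorm v := by
  have hsum : euclNorm v = Real.sqrt (euclNorm (first3 v) ^ 2 + euclNorm (last3 v) ^ 2) := by
    unfold euclNorm
    rw [Real.sq_sqrt (by positivity), Real.sq_sqrt (by positivity)]
    congr 1
    rw [Fin.sum_univ_six, Fin.sum_univ_three, Fin.sum_univ_three]
    simp [first3, last3]
    ring
  rw [hsum]
  set a := euclNorm (first3 v); set b := euclNorm (last3 v)
  have ha : 0 ≤ a := euclNorm_nonneg' _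
  have hb : 0 ≤ b := euclNorm_nonneg' _
  rw [← Real.sqrt_mul (by norm_num)]
  rw [show a + b = Real.sqrt ((a+b)^2) from (Real.sqrt_sq (by linarith)).symm]
  apply Real.sqrt_le_sqrt
  nlinarith [sq_nonneg (a - b)]

lemma dVsteer_perturb (ω T : ℝ) (x₀ xf δx₀ δxf : Fin 6 → ℝ) :
    dVsteer ω T (x₀ + δx₀) (xf + δxf) =
      dVsteer ω T x₀ xf +
        (Phiv ω T)⁻¹.mulVec (δxf - (expm ω T).mulVec δx₀) := by
  unfold dVsteer
  rw [← Matrix.mulVec_add]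
  have harg : xf + δxf - (expm ω T).mulVec (x₀ + δx₀)
      = (xf - (expm ω T).mulVec x₀) + (δxf - (expm ω T).mulVec δx₀) := by
    rw [Matrix.mulVec_add]
    funext i
    simp only [Pi.add_apply, Pi.sub_apply]
    ring
  rw [harg]

/-- **Steering with perturbed endpoints (positive duration), quantitative form.**
If `Φ_v(T)` is invertible, then
`J_T(x₀ + δx₀, x_f + δx_f) ≤ J_T(x₀, x_f) + √2 ‖Φ_v(T)⁻¹‖ (‖δx_f‖ + ‖exp(T A)‖ ‖δx₀‖)`. -/
theorem perturbed_steering_cost_bound (ω : ℝ) (hω : 0 < ω) (T : ℝ) (hT : 0 < T)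
    (hinv : IsUnit (Phiv ω T)) (x₀ xf δx₀ δxf : Fin 6 → ℝ) :
    Jfix ω T (x₀ + δx₀) (xf + δxf) ≤
      Jfix ω T x₀ xf +
        Real.sqrt 2 * opNorm (Phiv ω T)⁻¹ *
          (euclNorm δxf + opNorm (expm ω T) * euclNorm δx₀) := by
  set d := dVsteer ω T x₀ xf
  set e := (Phiv ω T)⁻¹.mulVec (δxf - (expm ω T).mulVec δx₀) with he
  have h1 : Jfix ω T (x₀ + δx₀) (xf + δxf) ≤
      Jfix ω T x₀ xf + (euclNorm (first3 e) + euclNorm (last3 e)) := by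
    unfold Jfix
    rw [dVsteer_perturb]
    rw [first3_add, last3_add]
    have h1 := euclNorm_add_le (first3 d) (first3 e)
    have h2 := euclNorm_add_le (last3 d) (last3 e)
    simp only [he, d] at h1 h2 ⊢
    linarith
  have h2 : euclNorm (first3 e) + euclNorm (last3 e) ≤ Real.sqrt 2 * euclNorm e :=
    euclNorm_split e
  have h3 : euclNorm e ≤ opNorm (Phiv ω T)⁻¹ * euclNorm (δxf - (expm ω T).mulVec δx₀) :=
    euclNorm_mulVec_le _ _
  have h4 : euclNorm (δxf - (expm ω T).mulVec δx₀) ≤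
      euclNorm δxf + opNorm (expm ω T) * euclNorm δx₀ := by
    have t1 : euclNorm (δxf - (expm ω T).mulVec δx₀) ≤
        euclNorm δxf + euclNorm (-(expm ω T).mulVec δx₀) := by
      have := euclNorm_add_le δxf (-(expm ω T).mulVec δx₀)
      rwa [← sub_eq_add_neg] at this
    rw [euclNorm_neg] at t1
    have t2 := euclNorm_mulVec_le (expm ω T) δx₀
    linarith
  have hop1 : (0:ℝ) ≤ opNorm (Phiv ω T)⁻¹ := norm_nonneg _
  have hs2 : (0:ℝ) ≤ Real.sqrt 2 := Real.sqrt_nonneg _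
  calc Jfix ω T (x₀ + δx₀) (xf + δxf)
      ≤ Jfix ω T x₀ xf + (euclNorm (first3 e) + euclNorm (last3 e)) := h1
    _ ≤ Jfix ω T x₀ xf + Real.sqrt 2 * euclNorm e := by linarith
    _ ≤ Jfix ω T x₀ xf + Real.sqrt 2 * opNorm (Phiv ω T)⁻¹ *
          (euclNorm δxf + opNorm (expm ω T) * euclNorm δx₀) := by
        have hle : Real.sqrt 2 * euclNorm e ≤ Real.sqrt 2 * (opNorm (Phiv ω T)⁻¹ *
            (euclNorm δxf + opNorm (expm ω T) * euclNorm δx₀)) := by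
          apply mul_le_mul_of_nonneg_left _ hs2
          calc euclNorm e ≤ opNorm (Phiv ω T)⁻¹ * euclNorm (δxf - (expm ω T).mulVec δx₀) := h3
            _ ≤ opNorm (Phiv ω T)⁻¹ * (euclNorm δxf + opNorm (expm ω T) * euclNorm δx₀) :=
              mul_le_mul_of_nonneg_left h4 hop1
        have hassoc := mul_assoc (Real.sqrt 2) (opNorm (Phiv ω T)⁻¹)
          (euclNorm δxf + opNorm (expm ω T) * euclNorm δx₀)
        linarith
end
end

section
/- Let ρ > 0 and define the safe circularized-orbit set X_inv = {x ∈ ℝ⁶ : |x₁| ≥ ρ, x₄ = 0, x₅ = −(3/2)·ω·x₁}, i.e. states with zero radial velocity, in-track velocity equal to −(3/2)ω times the radial position, and radial position outside the band of half-width ρ. Then X_inv is positively invariant under the uncontrolled CWH flow: for every x ∈ X_inv and every t ≥ 0, exp(t·A)·x ∈ X_inv. Moreover the radial coordinate is constant along the flow: (exp(t·A)·x)₁ = x₁ for all t ≥ 0. -/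
noncomputable section

section vecaux
variable {α : Type*}
lemma cv6_1 (x : α) (u : Fin 5 → α) : Matrix.vecCons x u (1 : Fin 6) = u 0 := rfl
lemma cv6_2 (x : α) (u : Fin 5 → α) : Matrix.vecCons x u (2 : Fin 6) = u 1 := rfl
lemma cv6_3 (x : α) (u : Fin 5 → α) : Matrix.vecCons x u (3 : Fin 6) = u 2 := rfl
lemma cv6_4 (x : α) (u : Fin 5 → α) : Matrix.vecCons x u (4 : Fin 6) = u 3 := rfl
lemma cv6_5 (x : α) (u : Fin 5 → α) : Matrix.vecCons x u (5 : Fin 6) = u 4 := rfl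
lemma cv5_1 (x : α) (u : Fin 4 → α) : Matrix.vecCons x u (1 : Fin 5) = u 0 := rfl
lemma cv5_2 (x : α) (u : Fin 4 → α) : Matrix.vecCons x u (2 : Fin 5) = u 1 := rfl
lemma cv5_3 (x : α) (u : Fin 4 → α) : Matrix.vecCons x u (3 : Fin 5) = u 2 := rfl
lemma cv5_4 (x : α) (u : Fin 4 → α) : Matrix.vecCons x u (4 : Fin 5) = u 3 := rfl
lemma cv4_1 (x : α) (u : Fin 3 → α) : Matrix.vecCons x u (1 : Fin 4) = u 0 := rfl
lemma cv4_2 (x : α) (u : Fin 3 → α) : Matrix.vecCons x u (2 : Fin 4) = u 1 := rfl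
lemma cv4_3 (x : α) (u : Fin 3 → α) : Matrix.vecCons x u (3 : Fin 4) = u 2 := rfl
lemma cv3_1 (x : α) (u : Fin 2 → α) : Matrix.vecCons x u (1 : Fin 3) = u 0 := rfl
lemma cv3_2 (x : α) (u : Fin 2 → α) : Matrix.vecCons x u (2 : Fin 3) = u 1 := rfl
lemma cv2_1 (x : α) (u : Fin 1 → α) : Matrix.vecCons x u (1 : Fin 2) = u 0 := rfl
lemma fm6_0 (h : 0 < 6) : (⟨0, h⟩ : Fin 6) = (0 : Fin 6) := rfl
lemma fm6_1 (h : 1 < 6) : (⟨1, h⟩ : Fin 6) = (1 : Fin 6) := rfl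
lemma fm6_2 (h : 2 < 6) : (⟨2, h⟩ : Fin 6) = (2 : Fin 6) := rfl
lemma fm6_3 (h : 3 < 6) : (⟨3, h⟩ : Fin 6) = (3 : Fin 6) := rfl
lemma fm6_4 (h : 4 < 6) : (⟨4, h⟩ : Fin 6) = (4 : Fin 6) := rfl
lemma fm6_5 (h : 5 < 6) : (⟨5, h⟩ : Fin 6) = (5 : Fin 6) := rfl
end vecaux

/-- Action of the CWH matrix on a vector, componentwise. -/
lemma cwhA_mulVec (ω : ℝ) (v : Fin 6 → ℝ) :
    (cwhA ω).mulVec v =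
      ![v 3, v 4, v 5, 3*ω^2*v 0 + 2*ω*v 4, -2*ω*v 3, -ω^2*v 2] := by
  funext i
  fin_cases i <;>
    simp only [fm6_0, fm6_1, fm6_2, fm6_3, fm6_4, fm6_5] <;>
    simp only [cwhA, Matrix.mulVec, dotProduct, Fin.sum_univ_six, Matrix.of_apply,
      Matrix.cons_val_zero, cv6_1, cv6_2, cv6_3, cv6_4, cv6_5, cv5_1, cv5_2, cv5_3, cv5_4, cv4_1, cv4_2, cv4_3, cv3_1, cv3_2, cv2_1] <;>
    ring

/-- The flow `t ↦ exp(t A) x` solves the linear ODE. -/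
lemma hasDerivAt_expm_mulVec (ω : ℝ) (x : Fin 6 → ℝ) (t : ℝ) :
    HasDerivAt (fun s : ℝ => (expm ω s).mulVec x)
      ((cwhA ω).mulVec ((expm ω t).mulVec x)) t := by
  letI : NormedRing (Matrix (Fin 6) (Fin 6) ℝ) := Matrix.linftyOpNormedRing
  letI : NormedAlgebra ℝ (Matrix (Fin 6) (Fin 6) ℝ) := Matrix.linftyOpNormedAlgebra
  have h := hasDerivAt_exp_smul_const' (𝕂 := ℝ) (cwhA ω) t
  let φ : Matrix (Fin 6) (Fin 6) ℝ →ₗ[ℝ] (Fin 6 → ℝ) :=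
    { toFun := fun M => M.mulVec x,
      map_add' := fun M N => Matrix.add_mulVec M N x,
      map_smul' := fun c M => Matrix.smul_mulVec c M x }
  have hφ := (LinearMap.toContinuousLinearMap φ).hasFDerivAt.comp_hasDerivAt t h
  have : HasDerivAt (fun s : ℝ => (NormedSpace.exp (s • cwhA ω)).mulVec x)
      ((cwhA ω * NormedSpace.exp (t • cwhA ω)).mulVec x) t := hφ
  simpa [expm, ← Matrix.mulVec_mulVec] using this

/-- **Positive invariance of the safe circularized-orbit set.**
The set `X_inv = {x : |δx| ≥ ρ, δẋ = 0, δẏ = −(3/2) ω δx}` is positively invariant under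
the uncontrolled CWH flow, and the radial coordinate is constant along the flow. -/
theorem safe_circular_orbits_positively_invariant (ω : ℝ) (hω : 0 < ω) (ρ : ℝ) (hρ : 0 < ρ) :
    ∀ x : Fin 6 → ℝ,
      x ∈ {x : Fin 6 → ℝ | ρ ≤ |x 0| ∧ x 3 = 0 ∧ x 4 = -(3 / 2) * ω * x 0} →
      ∀ t : ℝ, 0 ≤ t →
        (expm ω t).mulVec x ∈
          {x : Fin 6 → ℝ | ρ ≤ |x 0| ∧ x 3 = 0 ∧ x 4 = -(3 / 2) * ω * x 0} ∧
        ((expm ω t).mulVec x) 0 = x 0 := by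
  intro x hx t ht
  obtain ⟨hx0, hx3, hx4⟩ := hx
  have hω0 : ω ≠ 0 := ne_of_gt hω
  set A := cwhA ω with hA
  set c : ℝ → Fin 6 → ℝ := fun s =>
    ![x 0, x 1 + s * (-(3/2)*ω*x 0),
      x 2 * Real.cos (ω*s) + x 5/ω * Real.sin (ω*s),
      0, -(3/2)*ω*x 0,
      -(x 2*ω) * Real.sin (ω*s) + x 5 * Real.cos (ω*s)] with hcdef
  have hcos : ∀ s : ℝ, HasDerivAt (fun u : ℝ => Real.cos (ω*u)) (-Real.sin (ω*s) * ω) s := by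
    intro s
    simpa [Function.comp_def] using (Real.hasDerivAt_cos (ω*s)).comp s ((hasDerivAt_id s).const_mul ω)
  have hsin : ∀ s : ℝ, HasDerivAt (fun u : ℝ => Real.sin (ω*u)) (Real.cos (ω*s) * ω) s := by
    intro s
    simpa [Function.comp_def] using (Real.hasDerivAt_sin (ω*s)).comp s ((hasDerivAt_id s).const_mul ω)
  have hderivc : ∀ s : ℝ, HasDerivAt c (A.mulVec (c s)) s := by
    intro s
    rw [hA, cwhA_mulVec]
    rw [hasDerivAt_pi]
    intro i
    fin_cases i <;>
      simp only [fm6_0, fm6_1, fm6_2, fm6_3, fm6_4, fm6_5] <;>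
      simp only [hcdef, Matrix.cons_val_zero, cv6_1, cv6_2, cv6_3, cv6_4, cv6_5, cv5_1, cv5_2, cv5_3, cv5_4, cv4_1, cv4_2, cv4_3, cv3_1, cv3_2, cv2_1]
    · exact hasDerivAt_const s (x 0)
    · have h1 := (hasDerivAt_const s (x 1)).add
        (hasDerivAt_mul_const (x := s) (-(3/2)*ω*x 0))
      convert h1 using 1
      · rfl
      ring
    · have h2 := ((hcos s).const_mul (x 2)).add ((hsin s).const_mul (x 5/ω))
      convert h2 using 1
      · rfl
      field_simp
    · have h3 : (3:ℝ)*ω^2*x 0 + 2*ω*(-(3/2)*ω*x 0) = 0 := by ring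
      rw [h3]
      exact hasDerivAt_const s _
    · have h4 : (-2:ℝ)*ω*(0:ℝ) = 0 := by ring
      rw [h4]
      exact hasDerivAt_const s _
    · have h5 := ((hsin s).const_mul (-(x 2*ω))).add ((hcos s).const_mul (x 5))
      convert h5 using 1
      · rfl
      field_simp
      ring
  set y : ℝ → Fin 6 → ℝ := fun s => (expm ω s).mulVec x with hydef
  have hderivy : ∀ s : ℝ, HasDerivAt y (A.mulVec (y s)) s := fun s =>
    hasDerivAt_expm_mulVec ω x s
  have hy0 : y 0 = x := by
    simp [hydef, expm, NormedSpace.exp_zero]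
  have hc0 : c 0 = x := by
    funext i
    fin_cases i <;> simp only [fm6_0, fm6_1, fm6_2, fm6_3, fm6_4, fm6_5] <;>
      simp [hcdef, hx3, hx4, Matrix.cons_val_zero, cv6_1, cv6_2, cv6_3, cv6_4, cv6_5, cv5_1, cv5_2, cv5_3, cv5_4, cv4_1, cv4_2, cv4_3, cv3_1, cv3_2, cv2_1]
  set L : (Fin 6 → ℝ) →L[ℝ] (Fin 6 → ℝ) :=
    LinearMap.toContinuousLinearMap (Matrix.mulVecLin A) with hL
  have hLip : ∀ s : ℝ, LipschitzOnWith ‖L‖₊ (fun w => A.mulVec w) (Set.univ) := by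
    intro s
    have hl : LipschitzWith ‖L‖₊ (fun w => A.mulVec w) := by
      have := L.lipschitz
      exact this
    exact hl.lipschitzOnWith
  have huniq : Set.EqOn y c (Set.Icc 0 t) := by
    refine ODE_solution_unique_of_mem_Icc_right
      (v := fun _ w => A.mulVec w) (s := fun _ => Set.univ) (K := ‖L‖₊)
      (fun s _ => hLip s)
      (fun s _ => (hderivy s).continuousAt.continuousWithinAt)
      (fun s _ => (hderivy s).hasDerivWithinAt)
      (fun _ _ => trivial)
      (fun s _ => (hderivc s).continuousAt.continuousWithinAt)
      (fun s _ => (hderivc s).hasDerivWithinAt)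
      (fun _ _ => trivial) ?_
    rw [hy0, hc0]
  have hyt : (expm ω t).mulVec x = c t := huniq ⟨ht, le_refl t⟩
  rw [hyt]
  refine ⟨⟨?_, ?_, ?_⟩, ?_⟩ <;>
    simp [hcdef, hx0, Matrix.cons_val_zero, cv6_1, cv6_2, cv6_3, cv6_4, cv6_5, cv5_1, cv5_2, cv5_3, cv5_4, cv4_1, cv4_2, cv4_3, cv3_1, cv3_2, cv2_1]

end
end
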